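/- Let A be a commutative ring, M an A-module, f ∈ A, and c ∈ M^∧_f an element of the f-adic completion with fⁿc = 0 for some n ≥ 1. Suppose M has no f-torsion. For each i ≥ 1 let cᵢ ∈ M be an element whose image in M/fⁱM equals the image of c. Then for all i > n, cᵢ ∈ f^{i−n}M, and consequently c = 0. -/

import Mathlib

open Pointwise

theorem stmt19 (A : Type*) [CommRing A] (M : Type*) [AddCommGroup M] [Module A M] (f : A)
    (htf : ∀ m : M, f • m = 0 → m = 0)
    (c : AdicCompletion (Ideal.span {f}) M) (n : ℕ) (hn : 1 ≤ n) (hc : f ^ n • c = 0)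
    (cs : ℕ → M)
    (hcs : ∀ i : ℕ, AdicCompletion.eval (Ideal.span {f}) M i c =
      Submodule.Quotient.mk (cs i)) :
    (∀ i : ℕ, n < i → cs i ∈ (Ideal.span {f}) ^ (i - n) • (⊤ : Submodule A M)) ∧
      c = 0 := by
  have hpow : ∀ k : ℕ, (Ideal.span {f}) ^ k • (⊤ : Submodule A M)
      = f ^ k • (⊤ : Submodule A M) := by
    intro k
    rw [Ideal.span_singleton_pow, Submodule.ideal_span_singleton_smul]
  have hinj : ∀ k : ℕ, ∀ m : M, f ^ k • m = 0 → m = 0 := by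
    intro k
    induction k with
    | zero => intro m hm; simpa using hm
    | succ k ih =>
      intro m hm
      apply ih
      apply htf
      rwa [← smul_assoc, smul_eq_mul, mul_comm, ← pow_succ]
  have key : ∀ i : ℕ, n < i → cs i ∈ (Ideal.span {f}) ^ (i - n) • (⊤ : Submodule A M) := by
    intro i hi
    have h1 : AdicCompletion.eval (Ideal.span {f}) M i (f ^ n • c) = 0 := by rw [hc]; simp
    rw [map_smul, hcs i] at h1
    have h2 : f ^ n • cs i ∈ (Ideal.span {f}) ^ i • (⊤ : Submodule A M) := by
      rwa [← Submodule.Quotient.mk_smul, Submodule.Quotient.mk_eq_zero] at h1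
    rw [hpow i] at h2
    obtain ⟨m, -, hm⟩ : ∃ m' ∈ (⊤ : Submodule A M), f ^ i • m' = f ^ n • cs i := by
      rw [← SetLike.mem_coe, Submodule.coe_pointwise_smul] at h2
      exact Set.mem_smul_set.mp h2
    rw [show f ^ i = f ^ n * f ^ (i - n) from by rw [← pow_add]; congr 1; omega,
      mul_smul] at hm
    have hz : f ^ n • (cs i - f ^ (i - n) • m) = 0 := by
      rw [smul_sub, hm, sub_self]
    have := hinj n _ hz
    have hcseq : cs i = f ^ (i - n) • m := by
      rwa [sub_eq_zero] at this
    rw [hpow (i - n), hcseq]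
    exact Submodule.smul_mem_pointwise_smul m _ _ Submodule.mem_top
  refine ⟨key, ?_⟩
  ext j
  show c.val j = (0 : AdicCompletion (Ideal.span {f}) M).val j
  rcases Nat.eq_zero_or_pos j with hj | hj
  · subst hj
    have : Subsingleton (M ⧸ ((Ideal.span {f}) ^ 0 • (⊤ : Submodule A M))) := by
      rw [Submodule.Quotient.subsingleton_iff, pow_zero, Ideal.one_eq_top,
        Submodule.top_smul]
    exact Subsingleton.elim _ _
  · have hjn : j ≤ j + n := Nat.le_add_right j n
    have h1 : AdicCompletion.transitionMap (Ideal.span {f}) M hjn (c.val (j + n)) = c.val j :=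
      AdicCompletion.transitionMap_comp_eval_apply _ _ hjn c
    have hval : c.val (j + n) = Submodule.Quotient.mk (cs (j + n)) := by
      rw [← AdicCompletion.eval_apply]; exact hcs (j + n)
    rw [hval, show AdicCompletion.transitionMap (Ideal.span {f}) M hjn
        (Submodule.Quotient.mk (cs (j + n))) = Submodule.Quotient.mk (cs (j + n)) from rfl] at h1
    have h2 : cs (j + n) ∈ (Ideal.span {f}) ^ j • (⊤ : Submodule A M) := by
      simpa using key (j + n) (by omega)
    rw [← h1]
    simpa [Submodule.Quotient.mk_eq_zero] using h2
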